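/- Suppose any quantum circuit with L two-qubit gates can be simulated by an adiabatic computation whose output is ε-close in ℓ₂-norm to the circuit's history state |η⟩ = (1/√(L'+1)) Σ_ℓ |α(ℓ)⟩⊗|clock_ℓ⟩. If a circuit with L gates is padded with (2/ε − 1)L identity gates (total L' = 2L/ε gates), then tracing out the clock register of its history state yields a density matrix that is ε/2-close in trace distance to |α(L)⟩⟨α(L)|, the final state of the original circuit; consequently the adiabatic output, after tracing out the clock, is ε-close in trace distance to the circuit's final state. -/

import Mathlib

open scoped ComplexOrder

/-! Padding a circuit with identity gates concentrates the history state on the final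
state: if the last `L' - L` gates are identities and `L' ≥ 2L/ε`, then tracing out the
clock register of the history state gives a density matrix `ε/2`-close in trace
distance to the final state of the circuit, and consequently the adiabatic output
(which is `ε/2`-close in `ℓ₂`-norm to the history state) yields, after tracing out the
clock, a state `ε`-close in trace distance to the circuit's final state. -/

/-- The trace norm `‖A‖₁ = tr √(A† A)` of a complex square matrix. -/
noncomputable def traceNorm {m : Type*} [Fintype m] [DecidableEq m]
    (A : Matrix m m ℂ) : ℝ :=
  (((Matrix.posSemidef_conjTranspose_mul_self A).1.eigenvectorUnitary : Matrix m m ℂ) *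
      Matrix.diagonal (((↑) : ℝ → ℂ) ∘ Real.sqrt ∘ (Matrix.posSemidef_conjTranspose_mul_self A).1.eigenvalues) *
      (star (Matrix.posSemidef_conjTranspose_mul_self A).1.eigenvectorUnitary : Matrix m m ℂ)).trace.re

/-- Trace distance `(1/2)·‖ρ - σ‖₁`. -/
noncomputable def traceDist {m : Type*} [Fintype m] [DecidableEq m]
    (ρ σ : Matrix m m ℂ) : ℝ :=
  traceNorm (ρ - σ) / 2

/-- Partial trace over the clock (second) register. -/
noncomputable def ptraceClock {X C : Type*} [Fintype C]
    (ρ : Matrix (X × C) (X × C) ℂ) : Matrix X X ℂ :=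
  Matrix.of fun x y => ∑ c : C, ρ (x, c) (y, c)

/-- The rank-one density matrix `|v⟩⟨v|` of a vector `v`. -/
noncomputable def densityOf {X : Type*} (v : X → ℂ) : Matrix X X ℂ :=
  Matrix.vecMulVec v (star v)

/-- The unary clock state `|1^ℓ 0^(L-ℓ)⟩`. -/
def clk (L : ℕ) (ℓ : ℕ) : Fin L → Bool := fun j => decide ((j : ℕ) < ℓ)

section Helpers

open Matrix

variable {m : Type*} [Fintype m] [DecidableEq m]


lemma traceNorm_dual (A : Matrix m m ℂ) (hA : A.IsHermitian) :
    (∃ S : Matrix m m ℂ, Sᴴ * S = 1 ∧ S * Sᴴ = 1 ∧ ((S * A).trace).re = traceNorm A) ∧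
    (∀ B : Matrix m m ℂ, B * Bᴴ = 1 → ((B * A).trace).re ≤ traceNorm A) := by
  classical
  set U : Matrix m m ℂ := (hA.eigenvectorUnitary : Matrix m m ℂ) with hU
  have hUU : star U * U = 1 := Matrix.UnitaryGroup.star_mul_self _
  have hUU' : U * star U = 1 := by
    simpa [hU] using (hA.eigenvectorUnitary).2.2
  have hstar : star U = Uᴴ := rfl
  set lam := hA.eigenvalues with hlam
  set D : Matrix m m ℂ := Matrix.diagonal (RCLike.ofReal ∘ lam) with hD
  have hspec : A = U * D * star U := hA.spectral_theorem
  have key : ∀ X Y : Matrix m m ℂ, (U * X * star U) * (U * Y * star U) = U * (X * Y) * star U := by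
    intro X Y
    calc (U * X * star U) * (U * Y * star U) = U * X * (star U * U) * Y * star U := by
          simp only [Matrix.mul_assoc]
      _ = U * (X * Y) * star U := by rw [hUU]; simp only [Matrix.mul_one, Matrix.mul_assoc]
  -- sqrt of AᴴA is U * |D| * Uᴴ
  set P : Matrix m m ℂ := U * Matrix.diagonal (fun i => ((|lam i| : ℝ) : ℂ)) * star U with hP
  have hPpsd : P.PosSemidef := by
    rw [hP, hstar]
    refine Matrix.PosSemidef.mul_mul_conjTranspose_same ?_ U
    refine Matrix.posSemidef_diagonal_iff.mpr fun i => ?_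
    exact_mod_cast abs_nonneg (lam i)
  have hPsq : P ^ 2 = Aᴴ * A := by
    have hAH : Aᴴ = A := hA
    rw [hAH, pow_two, hP, key]
    conv_rhs => rw [hspec]
    rw [key, hD, Matrix.diagonal_mul_diagonal, Matrix.diagonal_mul_diagonal]
    congr 2
    funext i
    simp only [Function.comp_apply, RCLike.ofReal_mul]
    have : ∀ a : ℝ, ((|a| : ℝ) : ℂ) * ((|a| : ℝ) : ℂ) = ((a : ℝ) : ℂ) * a := by
      intro a; norm_cast; rw [abs_mul_abs_self]
    simp only [this]
    rfl

  have hH := (Matrix.posSemidef_conjTranspose_mul_self A).1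
  have hsqrt : ((hH.eigenvectorUnitary : Matrix m m ℂ) *
      Matrix.diagonal (((↑) : ℝ → ℂ) ∘ Real.sqrt ∘ hH.eigenvalues) *
      (star hH.eigenvectorUnitary : Matrix m m ℂ)) = P := by
    have h1 : ((hH.eigenvectorUnitary : Matrix m m ℂ) *
        Matrix.diagonal (((↑) : ℝ → ℂ) ∘ Real.sqrt ∘ hH.eigenvalues) *
        (star hH.eigenvectorUnitary : Matrix m m ℂ)) = cfc Real.sqrt (Aᴴ * A) := by
      rw [hH.cfc_eq]; rfl
    have hAH : Aᴴ = A := hA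
    rw [h1, hAH, ← sq, ← cfc_comp_pow Real.sqrt 2 A (ha := hA.isSelfAdjoint)]
    have : (fun x : ℝ => Real.sqrt (x ^ 2)) = fun x => |x| := funext fun x => Real.sqrt_sq_eq_abs x
    rw [this, hA.cfc_eq]; rfl
  have htrP : P.trace = ((∑ i, |lam i| : ℝ) : ℂ) := by
    rw [hP, Matrix.trace_mul_cycle, hUU, Matrix.one_mul, Matrix.trace_diagonal]
    push_cast
    rfl
  have htn : traceNorm A = ∑ i, |lam i| := by
    unfold traceNorm
    rw [hsqrt, htrP, Complex.ofReal_re]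
  have hadj : ∀ X : Matrix m m ℂ, (U * X * star U)ᴴ = U * Xᴴ * star U := by
    intro X
    rw [hstar]
    simp only [Matrix.conjTranspose_mul, Matrix.conjTranspose_conjTranspose,
      Matrix.mul_assoc]
  constructor
  · set s : m → ℂ := fun i => (((if 0 ≤ lam i then 1 else -1 : ℝ)) : ℂ) with hs
    have hss : ∀ i, s i * s i = 1 := by
      intro i; by_cases h : 0 ≤ lam i <;> norm_num [hs, h]
    have hsreal : ∀ i, star (s i) = s i := by
      intro i; by_cases h : 0 ≤ lam i <;> simp [hs, h]
    refine ⟨U * Matrix.diagonal s * star U, ?_, ?_, ?_⟩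
    · rw [hadj, Matrix.diagonal_conjTranspose, key, Matrix.diagonal_mul_diagonal]
      have hfun : (fun i => star s i * s i) = fun _ : m => (1 : ℂ) := by
        funext i
        show star (s i) * s i = 1
        rw [hsreal i, hss i]
      rw [hfun, Matrix.diagonal_one, Matrix.mul_one, hUU']
    · rw [hadj, Matrix.diagonal_conjTranspose, key, Matrix.diagonal_mul_diagonal]
      have hfun : (fun i => s i * star s i) = fun _ : m => (1 : ℂ) := by
        funext i
        show s i * star (s i) = 1
        rw [hsreal i, hss i]
      rw [hfun, Matrix.diagonal_one, Matrix.mul_one, hUU']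
    · nth_rewrite 1 [hspec]
      rw [key, hD, Matrix.diagonal_mul_diagonal, Matrix.trace_mul_cycle, hUU,
        Matrix.one_mul, Matrix.trace_diagonal, htn]
      have : ∀ i, s i * (RCLike.ofReal ∘ lam) i = ((|lam i| : ℝ) : ℂ) := by
        intro i
        by_cases h : 0 ≤ lam i
        · simp only [hs, Function.comp_apply, if_pos h, abs_of_nonneg h]
          norm_num
        · simp only [hs, Function.comp_apply, if_neg h, abs_of_neg (lt_of_not_ge h)]
          push_cast
          ring_nf
          rfl
      simp only [this]
      push_cast
      simp
  · intro B hB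
    set M : Matrix m m ℂ := star U * (B * U) with hM
    have hMM : M * Mᴴ = 1 := by
      have hMH : Mᴴ = star U * (Bᴴ * U) := by
        rw [hM, hstar]
        simp only [Matrix.conjTranspose_mul, Matrix.conjTranspose_conjTranspose,
          Matrix.mul_assoc]
      rw [hMH, hM]
      calc star U * (B * U) * (star U * (Bᴴ * U))
          = star U * (B * (U * star U) * Bᴴ) * U := by simp only [Matrix.mul_assoc]
        _ = 1 := by rw [hUU', Matrix.mul_one, hB, Matrix.mul_one, hUU]
    have hdiagM : ∀ i, |(M i i).re| ≤ 1 := by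
      intro i
      have h1 : (M * Mᴴ) i i = 1 := by rw [hMM]; simp
      rw [Matrix.mul_apply] at h1
      simp only [Matrix.conjTranspose_apply, Complex.star_def, Complex.mul_conj] at h1
      have h2 : ∑ j, Complex.normSq (M i j) = 1 := by exact_mod_cast h1
      have h3 : Complex.normSq (M i i) ≤ 1 := by
        rw [← h2]
        exact Finset.single_le_sum (f := fun j => Complex.normSq (M i j))
          (fun j _ => Complex.normSq_nonneg _) (Finset.mem_univ i)
      have h4 := Complex.normSq_apply (M i i)
      nlinarith [Complex.normSq_nonneg (M i i), sq_nonneg ((M i i).im), sq_nonneg ((M i i).re),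
        abs_nonneg ((M i i).re), sq_abs ((M i i).re)]
    have e1 : B * A = (B * (U * D)) * star U := by
      nth_rewrite 1 [hspec]; simp only [Matrix.mul_assoc]
    have e2 : star U * (B * (U * D)) = M * D := by
      rw [hM]; simp only [Matrix.mul_assoc]
    have htr : (M * D).trace = ∑ i, (lam i : ℂ) * M i i := by
      rw [hD, Matrix.trace]
      congr 1; funext i
      rw [Matrix.diag_apply, Matrix.mul_apply]
      rw [Finset.sum_eq_single i]
      · rw [Matrix.diagonal_apply_eq]; simp only [Function.comp_apply]
        rw [mul_comm]
        norm_cast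
      · intro j _ hj
        rw [Matrix.diagonal_apply_ne _ hj, mul_zero]
      · intro h; exact absurd (Finset.mem_univ i) h
    rw [e1, Matrix.trace_mul_comm, e2, htr, htn]
    rw [Complex.re_sum]
    refine Finset.sum_le_sum fun i _ => ?_
    rw [Complex.re_ofReal_mul]
    calc lam i * (M i i).re ≤ |lam i * (M i i).re| := le_abs_self _
      _ = |lam i| * |(M i i).re| := abs_mul _ _
      _ ≤ |lam i| * 1 := by
          exact mul_le_mul_of_nonneg_left (hdiagM i) (abs_nonneg _)
      _ = |lam i| := mul_one _


variable {X : Type*} [Fintype X]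


lemma cs_bound (a b : X → ℂ) :
    ‖∑ x, star (b x) * a x‖ ≤
      Real.sqrt (∑ x, ‖a x‖ ^ 2) * Real.sqrt (∑ x, ‖b x‖ ^ 2) := by
  classical
  let a' : EuclideanSpace ℂ X := WithLp.toLp 2 a
  let b' : EuclideanSpace ℂ X := WithLp.toLp 2 b
  have h := norm_inner_le_norm (𝕜 := ℂ) b' a'
  rw [PiLp.inner_apply] at h
  simp only [RCLike.inner_apply, EuclideanSpace.norm_eq] at h
  calc ‖∑ x, star (b x) * a x‖ = ‖∑ x, (starRingEnd ℂ) (b' x) * a' x‖ := rfl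
    _ ≤ Real.sqrt (∑ x, ‖b' x‖ ^ 2) * Real.sqrt (∑ x, ‖a' x‖ ^ 2) := by simpa only [mul_comm] using h
    _ = Real.sqrt (∑ x, ‖a x‖ ^ 2) * Real.sqrt (∑ x, ‖b x‖ ^ 2) := mul_comm _ _

lemma mulVec_norm_sq [DecidableEq X] (S : Matrix X X ℂ) (hS : Sᴴ * S = 1) (v : X → ℂ) :
    ∑ x, ‖(S *ᵥ v) x‖ ^ 2 = ∑ x, ‖v x‖ ^ 2 := by
  have h1 : star (S *ᵥ v) ⬝ᵥ (S *ᵥ v) = star v ⬝ᵥ v := by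
    rw [Matrix.star_mulVec, Matrix.dotProduct_mulVec, Matrix.vecMul_vecMul, hS,
      Matrix.vecMul_one]
  have key : ∀ w : X → ℂ, star w ⬝ᵥ w = ((∑ x, ‖w x‖ ^ 2 : ℝ) : ℂ) := by
    intro w
    rw [dotProduct]
    push_cast
    congr 1; funext x
    simp only [Pi.star_apply, Complex.star_def]
    rw [mul_comm, Complex.mul_conj, Complex.normSq_eq_norm_sq]
    norm_cast
  have := h1
  rw [key, key] at this
  exact_mod_cast this

lemma trace_mul_vecMulVec_re_le [DecidableEq X] (B : Matrix X X ℂ) (a b : X → ℂ)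
    (hB : Bᴴ * B = 1) :
    ((B * Matrix.vecMulVec a (star b)).trace).re ≤
      Real.sqrt (∑ x, ‖a x‖ ^ 2) * Real.sqrt (∑ x, ‖b x‖ ^ 2) := by
  classical
  have htr : (B * Matrix.vecMulVec a (star b)).trace = ∑ x, star (b x) * (B *ᵥ a) x := by
    rw [Matrix.trace]
    congr 1; funext x
    rw [Matrix.diag_apply, Matrix.mul_apply, Matrix.mulVec]
    simp only [Matrix.vecMulVec_apply, Pi.star_apply, dotProduct]
    rw [Finset.mul_sum]
    congr 1; funext y
    ring
  calc ((B * Matrix.vecMulVec a (star b)).trace).re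
      ≤ ‖(B * Matrix.vecMulVec a (star b)).trace‖ := Complex.re_le_norm _
    _ = ‖∑ x, star (b x) * (B *ᵥ a) x‖ := by rw [htr]
    _ ≤ Real.sqrt (∑ x, ‖(B *ᵥ a) x‖ ^ 2) * Real.sqrt (∑ x, ‖b x‖ ^ 2) := cs_bound _ _
    _ = Real.sqrt (∑ x, ‖a x‖ ^ 2) * Real.sqrt (∑ x, ‖b x‖ ^ 2) := by
        rw [mulVec_norm_sq B hB a]


lemma sum_mul_star (w : X → ℂ) :
    ∑ x, w x * star (w x) = ((∑ x, ‖w x‖ ^ 2 : ℝ) : ℂ) := by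
  push_cast
  congr 1; funext x
  simp only [Complex.star_def]
  rw [Complex.mul_conj, Complex.normSq_eq_norm_sq]
  norm_cast

lemma densityOf_isHermitian (v : X → ℂ) : (densityOf v).IsHermitian := by
  ext x y
  simp only [densityOf, Matrix.conjTranspose_apply, Matrix.vecMulVec_apply, Pi.star_apply,
    star_mul', star_star]
  exact mul_comm _ _

lemma ptraceClock_isHermitian {C : Type*} [Fintype C] {M : Matrix (X × C) (X × C) ℂ}
    (hM : M.IsHermitian) : (ptraceClock M).IsHermitian := by
  ext x y
  simp only [ptraceClock, Matrix.conjTranspose_apply, Matrix.of_apply, star_sum]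
  exact Finset.sum_congr rfl fun c _ => congrFun (congrFun hM _) _


lemma clk_injOn (L' : ℕ) {a b : ℕ} (ha : a ≤ L') (hb : b ≤ L')
    (h : clk L' a = clk L' b) : a = b := by
  by_contra hne
  rcases lt_or_gt_of_ne hne with hab | hab
  · have haL : a < L' := lt_of_lt_of_le hab hb
    have := congrFun h ⟨a, haL⟩
    simp only [clk, decide_eq_decide] at this
    exact absurd (this.mpr hab) (lt_irrefl a)
  · have hbL : b < L' := lt_of_lt_of_le hab ha
    have := congrFun h ⟨b, hbL⟩
    simp only [clk, decide_eq_decide] at this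
    exact absurd (this.mp hab) (lt_irrefl b)

lemma sum_clock (L' : ℕ) (f g : ℕ → ℂ) :
    ∑ c : Fin L' → Bool,
      ((∑ ℓ ∈ Finset.range (L' + 1), if c = clk L' ℓ then f ℓ else 0) *
        star (∑ m ∈ Finset.range (L' + 1), if c = clk L' m then g m else 0))
      = ∑ ℓ ∈ Finset.range (L' + 1), f ℓ * star (g ℓ) := by
  classical
  have expand : ∀ c : Fin L' → Bool,
      ((∑ ℓ ∈ Finset.range (L' + 1), if c = clk L' ℓ then f ℓ else 0) *
        star (∑ m ∈ Finset.range (L' + 1), if c = clk L' m then g m else 0))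
      = ∑ ℓ ∈ Finset.range (L' + 1), ∑ m ∈ Finset.range (L' + 1),
          (if c = clk L' ℓ then f ℓ else 0) * star (if c = clk L' m then g m else 0) := by
    intro c
    rw [star_sum, Finset.sum_mul_sum]
  simp only [expand]
  rw [Finset.sum_comm]
  refine Finset.sum_congr rfl fun ℓ hℓ => ?_
  rw [Finset.sum_comm]
  have hℓ' : ℓ ≤ L' := Nat.lt_succ_iff.mp (Finset.mem_range.mp hℓ)
  have step1 : ∀ m, (∑ c : Fin L' → Bool,
      (if c = clk L' ℓ then f ℓ else 0) * star (if c = clk L' m then g m else 0))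
      = (if clk L' ℓ = clk L' m then f ℓ * star (g m) else 0) := by
    intro m
    rw [Finset.sum_eq_single (clk L' ℓ)]
    · rw [if_pos rfl]
      by_cases h : clk L' ℓ = clk L' m
      · rw [if_pos h, if_pos h]
      · rw [if_neg h, if_neg h, star_zero, mul_zero]
    · intro c _ hc
      rw [if_neg hc, zero_mul]
    · intro h; exact absurd (Finset.mem_univ _) h
  simp only [step1]
  rw [Finset.sum_eq_single ℓ]
  · rw [if_pos rfl]
  · intro m hm hmℓ
    rw [if_neg]
    intro hc
    exact hmℓ (clk_injOn L' (Nat.lt_succ_iff.mp (Finset.mem_range.mp hm)) hℓ' hc.symm)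
  · intro h; exact absurd hℓ h


end Helpers

open Matrix

set_option maxHeartbeats 1000000 in
theorem padded_history_state_close_to_output (n L L' : ℕ) (ε : ℝ) (hε : 0 < ε)
    (hLL' : L ≤ L') (hL' : 2 * (L : ℝ) / ε ≤ (L' : ℝ))
    (α : ℕ → (Fin n → Bool) → ℂ)
    (hunit : ∀ ℓ, ℓ ≤ L' → ∑ x : Fin n → Bool, ‖α ℓ x‖ ^ 2 = 1)
    (hpad : ∀ ℓ, L ≤ ℓ → ℓ ≤ L' → α ℓ = α L)
    (η : (Fin n → Bool) × (Fin L' → Bool) → ℂ)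
    (hη : η = fun p => ((1 / Real.sqrt (L' + 1) : ℝ) : ℂ) *
      ∑ ℓ ∈ Finset.range (L' + 1), if p.2 = clk L' ℓ then α ℓ p.1 else 0)
    (ψ : (Fin n → Bool) × (Fin L' → Bool) → ℂ)
    (hψunit : ∑ p : (Fin n → Bool) × (Fin L' → Bool), ‖ψ p‖ ^ 2 = 1)
    (hψη : Real.sqrt (∑ p : (Fin n → Bool) × (Fin L' → Bool), ‖ψ p - η p‖ ^ 2) ≤ ε / 2) :
    traceDist (ptraceClock (densityOf η)) (densityOf (α L)) ≤ ε / 2 ∧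
    traceDist (ptraceClock (densityOf ψ)) (densityOf (α L)) ≤ ε := by
  classical
  set k : ℝ := 1 / Real.sqrt (L' + 1) with hk
  set cR : ℝ := ((L' : ℝ) + 1)⁻¹ with hcR
  have hL1pos : (0 : ℝ) < (L' : ℝ) + 1 := by positivity
  have hcRpos : 0 < cR := by rw [hcR]; positivity
  have hk2 : k * k = cR := by
    rw [hk, hcR]
    rw [div_mul_div_comm, one_mul, Real.mul_self_sqrt (le_of_lt hL1pos)]
    rw [one_div]
  -- key entrywise computation
  have hcomp : ∀ x y : (Fin n → Bool), (∑ cc : (Fin L' → Bool), η (x, cc) * star (η (y, cc)))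
      = (cR : ℂ) * ∑ ℓ ∈ Finset.range (L' + 1), α ℓ x * star (α ℓ y) := by
    intro x y
    have : ∀ cc : (Fin L' → Bool), η (x, cc) * star (η (y, cc))
        = ((cR : ℝ) : ℂ) *
          ((∑ ℓ ∈ Finset.range (L' + 1), if cc = clk L' ℓ then α ℓ x else 0) *
            star (∑ m ∈ Finset.range (L' + 1), if cc = clk L' m then α m y else 0)) := by
      intro cc
      rw [hη]
      simp only [star_mul', Complex.star_def, Complex.conj_ofReal]
      push_cast [← hk2]
      ring
    rw [Finset.sum_congr rfl fun cc _ => this cc, ← Finset.mul_sum,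
      sum_clock L' (fun ℓ => α ℓ x) (fun m => α m y)]
  set ρL := densityOf (α L) with hρL
  set ρη := ptraceClock (densityOf η) with hρη0
  set ρψ := ptraceClock (densityOf ψ) with hρψ0
  have hρη : ρη = ∑ ℓ ∈ Finset.range (L' + 1), ((cR : ℂ) • densityOf (α ℓ)) := by
    ext x y
    rw [hρη0]
    show (∑ cc : (Fin L' → Bool), densityOf η (x, cc) (y, cc)) = _
    have lhs_eq : (∑ cc : (Fin L' → Bool), densityOf η (x, cc) (y, cc))
        = ∑ cc : (Fin L' → Bool), η (x, cc) * star (η (y, cc)) := by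
      refine Finset.sum_congr rfl fun cc _ => ?_
      simp [densityOf, Matrix.vecMulVec_apply]
    rw [lhs_eq, hcomp x y]
    rw [Matrix.sum_apply, Finset.mul_sum]
    refine Finset.sum_congr rfl fun ℓ _ => ?_
    simp [densityOf, Matrix.vecMulVec_apply]
  -- norm of η
  have hηnorm : ∑ p : (Fin n → Bool) × (Fin L' → Bool), ‖η p‖ ^ 2 = 1 := by
    have h1 : ((∑ p : (Fin n → Bool) × (Fin L' → Bool), ‖η p‖ ^ 2 : ℝ) : ℂ) = 1 := by
      push_cast
      rw [show (∑ p : (Fin n → Bool) × (Fin L' → Bool), (‖η p‖ ^ 2 : ℂ)) = ∑ p : (Fin n → Bool) × (Fin L' → Bool), η p * star (η p) by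
        refine Finset.sum_congr rfl fun p _ => ?_
        simp only [Complex.star_def]
        rw [Complex.mul_conj, Complex.normSq_eq_norm_sq]; norm_cast]
      rw [Fintype.sum_prod_type]
      rw [Finset.sum_congr rfl fun x _ => hcomp x x]
      rw [← Finset.mul_sum, Finset.sum_comm]
      have : ∀ ℓ ∈ Finset.range (L' + 1), (∑ x : (Fin n → Bool), α ℓ x * star (α ℓ x)) = 1 := by
        intro ℓ hℓ
        rw [sum_mul_star, hunit ℓ (Nat.lt_succ_iff.mp (Finset.mem_range.mp hℓ))]
        norm_num
      rw [Finset.sum_congr rfl this, Finset.sum_const, Finset.card_range, nsmul_eq_mul,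
        mul_one]
      rw [hcR]
      push_cast
      rw [mul_comm, mul_inv_cancel₀ (ne_of_gt (by exact_mod_cast hL1pos))]
    exact_mod_cast h1
  -- Part 1
  have hA1herm : (ρη - ρL).IsHermitian :=
    (ptraceClock_isHermitian (densityOf_isHermitian η)).sub (densityOf_isHermitian (α L))
  obtain ⟨⟨S, hS1, hS2, hSeq⟩, hBnd1⟩ := traceNorm_dual _ hA1herm
  have hA1 : ρη - ρL = ∑ ℓ ∈ Finset.range (L' + 1),
      ((cR : ℂ) • (densityOf (α ℓ) - ρL)) := by
    rw [hρη]
    rw [Finset.sum_congr rfl fun ℓ _ => smul_sub (cR : ℂ) (densityOf (α ℓ)) ρL]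
    rw [Finset.sum_sub_distrib]
    congr 1
    rw [Finset.sum_const, Finset.card_range, ← smul_assoc]
    have : ((L' + 1 : ℕ) : ℂ) • (cR : ℂ) = 1 := by
      rw [hcR, smul_eq_mul]
      push_cast
      rw [mul_inv_cancel₀ (ne_of_gt (by exact_mod_cast hL1pos))]
    rw [← Nat.cast_smul_eq_nsmul ℂ, this, one_smul]
  have hdens_bound : ∀ (B : Matrix (Fin n → Bool) (Fin n → Bool) ℂ), Bᴴ * B = 1 → ∀ ℓ, ℓ ≤ L' →
      ((B * densityOf (α ℓ)).trace).re ≤ 1 := by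
    intro B hB ℓ hℓ
    have := trace_mul_vecMulVec_re_le B (α ℓ) (α ℓ) hB
    rw [hunit ℓ hℓ, Real.sqrt_one, mul_one] at this
    exact this
  have hTN1 : traceNorm (ρη - ρL) ≤ 2 * (L : ℝ) * cR := by
    rw [← hSeq]
    nth_rewrite 1 [hA1]
    rw [Matrix.mul_sum]
    rw [Finset.sum_congr rfl fun ℓ _ => Matrix.mul_smul S (cR : ℂ) _]
    rw [Matrix.trace_sum]
    rw [Finset.sum_congr rfl fun ℓ _ => Matrix.trace_smul _ _]
    rw [Complex.re_sum]
    have hterm : ∀ ℓ ∈ Finset.range (L' + 1),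
        ((cR : ℂ) • (S * (densityOf (α ℓ) - ρL)).trace).re
          ≤ (if ℓ < L then 2 * cR else 0) := by
      intro ℓ hℓ
      have hℓ' : ℓ ≤ L' := Nat.lt_succ_iff.mp (Finset.mem_range.mp hℓ)
      rw [smul_eq_mul, Complex.re_ofReal_mul]
      by_cases hcase : ℓ < L
      · rw [if_pos hcase]
        rw [Matrix.mul_sub, Matrix.trace_sub, Complex.sub_re]
        have b1 : ((S * densityOf (α ℓ)).trace).re ≤ 1 := hdens_bound S hS1 ℓ hℓ'
        have b2 : -((S * ρL).trace).re ≤ 1 := by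
          have hnegS : (-S)ᴴ * (-S) = 1 := by
            rw [Matrix.conjTranspose_neg, Matrix.neg_mul, Matrix.mul_neg, neg_neg, hS1]
          have := hdens_bound (-S) hnegS L hLL'
          rw [hρL] at *
          rw [Matrix.neg_mul, Matrix.trace_neg, Complex.neg_re] at this
          exact this
        nlinarith [hcRpos]
      · rw [if_neg hcase]
        have : α ℓ = α L := hpad ℓ (le_of_not_gt hcase) hℓ'
        rw [hρL, this, sub_self, Matrix.mul_zero, Matrix.trace_zero]
        simp
    calc ∑ ℓ ∈ Finset.range (L' + 1), ((cR : ℂ) • (S * (densityOf (α ℓ) - ρL)).trace).re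
        ≤ ∑ ℓ ∈ Finset.range (L' + 1), (if ℓ < L then 2 * cR else 0) :=
          Finset.sum_le_sum hterm
      _ = ∑ ℓ ∈ Finset.range L, (2 * cR) := by
          rw [← Finset.sum_subset (Finset.range_subset_range.mpr (show L ≤ L' + 1 by omega))
            (fun ℓ _ hℓ => if_neg (fun h => hℓ (Finset.mem_range.mpr h)))]
          exact Finset.sum_congr rfl fun ℓ hℓ => if_pos (Finset.mem_range.mp hℓ)
      _ = 2 * (L : ℝ) * cR := by
          rw [Finset.sum_const, Finset.card_range, nsmul_eq_mul]; ring
  have hLc : 2 * (L : ℝ) * cR ≤ ε := by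
    rw [hcR, ← div_eq_mul_inv, div_le_iff₀ hL1pos]
    have h2L : 2 * (L : ℝ) ≤ ε * L' := by
      rw [div_le_iff₀ hε] at hL'
      linarith [hL']
    nlinarith [hε]
  have part1 : traceDist ρη ρL ≤ ε / 2 := by
    rw [traceDist]
    have := le_trans hTN1 hLc
    linarith
  refine ⟨part1, ?_⟩
  -- Part 2
  have hA2herm : (ρψ - ρL).IsHermitian :=
    (ptraceClock_isHermitian (densityOf_isHermitian ψ)).sub (densityOf_isHermitian (α L))
  obtain ⟨⟨T, hT1, hT2, hTeq⟩, _⟩ := traceNorm_dual _ hA2herm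
  set u : (Fin n → Bool) × (Fin L' → Bool) → ℂ := fun p => ψ p + η p with hu
  set d : (Fin n → Bool) × (Fin L' → Bool) → ℂ := fun p => ψ p - η p with hd
  have hsplit : ρψ - ρη = ∑ cc : (Fin L' → Bool), (((1/2 : ℝ) : ℂ) •
      (Matrix.vecMulVec (fun x => u (x, cc)) (star (fun x => d (x, cc))) +
       Matrix.vecMulVec (fun x => d (x, cc)) (star (fun x => u (x, cc))))) := by
    ext x y
    rw [Matrix.sub_apply]
    rw [hρψ0, hρη0]
    show (∑ cc : (Fin L' → Bool), densityOf ψ (x, cc) (y, cc)) - (∑ cc : (Fin L' → Bool), densityOf η (x, cc) (y, cc)) = _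
    rw [← Finset.sum_sub_distrib, Matrix.sum_apply]
    refine Finset.sum_congr rfl fun cc _ => ?_
    simp only [densityOf, Matrix.vecMulVec_apply, Pi.star_apply, Matrix.smul_apply,
      Matrix.add_apply, hu, hd, star_add, star_sub, Complex.star_def, smul_eq_mul]
    push_cast
    ring
  set Uc : (Fin L' → Bool) → ℝ := fun cc => ∑ x : (Fin n → Bool), ‖u (x, cc)‖ ^ 2 with hUc
  set Dc : (Fin L' → Bool) → ℝ := fun cc => ∑ x : (Fin n → Bool), ‖d (x, cc)‖ ^ 2 with hDc
  have hfirst : ((T * (ρψ - ρη)).trace).re ≤ ∑ cc : (Fin L' → Bool), Real.sqrt (Uc cc) * Real.sqrt (Dc cc) := by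
    rw [hsplit, Matrix.mul_sum]
    rw [Finset.sum_congr rfl fun cc _ => Matrix.mul_smul T _ _]
    rw [Matrix.trace_sum]
    rw [Finset.sum_congr rfl fun cc _ => Matrix.trace_smul _ _]
    rw [Complex.re_sum]
    refine Finset.sum_le_sum fun cc _ => ?_
    rw [smul_eq_mul, Complex.re_ofReal_mul, Matrix.mul_add, Matrix.trace_add, Complex.add_re]
    have b1 := trace_mul_vecMulVec_re_le T (fun x => u (x, cc)) (fun x => d (x, cc)) hT1
    have b2 := trace_mul_vecMulVec_re_le T (fun x => d (x, cc)) (fun x => u (x, cc)) hT1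
    rw [← hUc, ← hDc] at *
    have : Real.sqrt (Dc cc) * Real.sqrt (Uc cc) = Real.sqrt (Uc cc) * Real.sqrt (Dc cc) :=
      mul_comm _ _
    nlinarith [b1, b2]
  have hUsum : ∑ cc : (Fin L' → Bool), Uc cc = ∑ p : (Fin n → Bool) × (Fin L' → Bool), ‖u p‖ ^ 2 := by
    rw [Fintype.sum_prod_type, Finset.sum_comm]
  have hDsum : ∑ cc : (Fin L' → Bool), Dc cc = ∑ p : (Fin n → Bool) × (Fin L' → Bool), ‖d p‖ ^ 2 := by
    rw [Fintype.sum_prod_type, Finset.sum_comm]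
  have hUb : ∑ p : (Fin n → Bool) × (Fin L' → Bool), ‖u p‖ ^ 2 ≤ 4 := by
    let ψ' : EuclideanSpace ℂ ((Fin n → Bool) × (Fin L' → Bool)) := WithLp.toLp 2 ψ
    let η' : EuclideanSpace ℂ ((Fin n → Bool) × (Fin L' → Bool)) := WithLp.toLp 2 η
    have hψn : ‖ψ'‖ = 1 := by
      rw [EuclideanSpace.norm_eq]
      rw [show (∑ p, ‖ψ' p‖ ^ 2) = (1 : ℝ) from hψunit, Real.sqrt_one]
    have hηn : ‖η'‖ = 1 := by
      rw [EuclideanSpace.norm_eq]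
      rw [show (∑ p, ‖η' p‖ ^ 2) = (1 : ℝ) from hηnorm, Real.sqrt_one]
    have htri : ‖ψ' + η'‖ ≤ 2 := by
      calc ‖ψ' + η'‖ ≤ ‖ψ'‖ + ‖η'‖ := norm_add_le _ _
        _ = 2 := by rw [hψn, hηn]; norm_num
    have heq : Real.sqrt (∑ p : (Fin n → Bool) × (Fin L' → Bool), ‖u p‖ ^ 2) = ‖ψ' + η'‖ := by
      rw [EuclideanSpace.norm_eq]
      congr 1
    have h1 : Real.sqrt (∑ p : (Fin n → Bool) × (Fin L' → Bool), ‖u p‖ ^ 2) ≤ 2 := heq ▸ htri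
    have h2 : (0:ℝ) ≤ ∑ p : (Fin n → Bool) × (Fin L' → Bool), ‖u p‖ ^ 2 := Finset.sum_nonneg fun p _ => sq_nonneg _
    nlinarith [Real.sq_sqrt h2, Real.sqrt_nonneg (∑ p : (Fin n → Bool) × (Fin L' → Bool), ‖u p‖ ^ 2)]
  have hDb : ∑ p : (Fin n → Bool) × (Fin L' → Bool), ‖d p‖ ^ 2 ≤ (ε/2) ^ 2 := by
    have h2 : (0:ℝ) ≤ ∑ p : (Fin n → Bool) × (Fin L' → Bool), ‖d p‖ ^ 2 := Finset.sum_nonneg fun p _ => sq_nonneg _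
    have := hψη
    nlinarith [Real.sq_sqrt h2, Real.sqrt_nonneg (∑ p : (Fin n → Bool) × (Fin L' → Bool), ‖d p‖ ^ 2)]
  have hCS : ∑ cc : (Fin L' → Bool), Real.sqrt (Uc cc) * Real.sqrt (Dc cc)
      ≤ Real.sqrt (∑ cc : (Fin L' → Bool), Uc cc) * Real.sqrt (∑ cc : (Fin L' → Bool), Dc cc) := by
    exact Real.sum_sqrt_mul_sqrt_le Finset.univ
      (fun cc => Finset.sum_nonneg fun x _ => sq_nonneg _)
      (fun cc => Finset.sum_nonneg fun x _ => sq_nonneg _)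
  have hCSfinal : ∑ cc : (Fin L' → Bool), Real.sqrt (Uc cc) * Real.sqrt (Dc cc) ≤ ε := by
    refine le_trans hCS ?_
    rw [hUsum, hDsum]
    calc Real.sqrt (∑ p : (Fin n → Bool) × (Fin L' → Bool), ‖u p‖ ^ 2) * Real.sqrt (∑ p : (Fin n → Bool) × (Fin L' → Bool), ‖d p‖ ^ 2)
        ≤ 2 * (ε/2) := by
          apply mul_le_mul
          · have : (4:ℝ) = 2^2 := by norm_num
            calc Real.sqrt (∑ p : (Fin n → Bool) × (Fin L' → Bool), ‖u p‖ ^ 2) ≤ Real.sqrt 4 := Real.sqrt_le_sqrt hUb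
              _ = 2 := by rw [this, Real.sqrt_sq (by norm_num : (0:ℝ) ≤ 2)]
          · exact hψη
          · exact Real.sqrt_nonneg _
          · norm_num
      _ = ε := by ring
  have hsecond : ((T * (ρη - ρL)).trace).re ≤ ε := by
    refine le_trans (hBnd1 T hT2) (le_trans hTN1 hLc)
  have hTN2 : traceNorm (ρψ - ρL) ≤ 2 * ε := by
    rw [← hTeq]
    have hdecomp : T * (ρψ - ρL) = T * (ρψ - ρη) + T * (ρη - ρL) := by
      rw [← Matrix.mul_add]
      congr 1
      exact (sub_add_sub_cancel _ _ _).symm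
    rw [hdecomp, Matrix.trace_add, Complex.add_re]
    have := le_trans hfirst hCSfinal
    linarith
  rw [traceDist]
  linarith
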